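/- arXiv:1902.04225 — 2 statements merged into one kernel-verified Lean document; each statement's English description precedes it below -/
import Mathlib

section
/- Let X be a complex vector subspace of the space of holomorphic functions on 𝔻, equipped with a norm ‖·‖_X making X a Banach space, such that convergence in the norm of X implies locally uniform convergence on 𝔻. Suppose there exist a bounded, non-constant function h ∈ X with h(0) = 0, and a sequence (φₙ)_{n≥1} of holomorphic automorphisms of 𝔻, such that h∘φₙ ∈ X for all n and ‖h∘φₙ‖_X → 0 as n → ∞. Then there exists f ∈ X with f(𝔻) = ℂ. -/
open Complex Metric Set Filter

lemma minmod_lemma {U : Set ℂ} (hUb : Bornology.IsBounded U)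
    {F : ℂ → ℂ} (hF : DiffContOnCl ℂ F U) {z₀ : ℂ} (hz₀ : z₀ ∈ U) {w : ℂ} {m : ℝ}
    (hm : ∀ z ∈ frontier U, m ≤ ‖F z - w‖) (hlt : ‖F z₀ - w‖ < m) :
    ∃ z ∈ closure U, F z = w := by
  by_contra hcon
  push_neg at hcon
  have hne : ∀ z ∈ closure U, F z - w ≠ 0 := fun z hz => sub_ne_zero.mpr (hcon z hz)
  have hm0 : 0 < m := lt_of_le_of_lt (norm_nonneg _) hlt
  have hG : DiffContOnCl ℂ (fun z => (F z - w)⁻¹) U := by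
    refine ⟨DifferentiableOn.inv (hF.differentiableOn.sub (differentiableOn_const w))
      (fun z hz => hne z (subset_closure hz)), ?_⟩
    exact ContinuousOn.inv₀ (hF.continuousOn.sub continuousOn_const) hne
  have hbound : ∀ z ∈ frontier U, ‖(F z - w)⁻¹‖ ≤ m⁻¹ := by
    intro z hz
    rw [norm_inv]
    exact inv_anti₀ hm0 (hm z hz)
  have h2 := Complex.norm_le_of_forall_mem_frontier_norm_le hUb hG hbound (subset_closure hz₀)
  rw [norm_inv] at h2
  have hFz₀ : 0 < ‖F z₀ - w‖ := norm_pos_iff.mpr (hne z₀ (subset_closure hz₀))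
  have : m ≤ ‖F z₀ - w‖ := by
    have := (inv_le_inv₀ (by positivity) hm0).mp h2
    linarith [this]
  linarith

lemma image_open_of_injOn {ψ : ℂ → ℂ} (hd : DifferentiableOn ℂ ψ (ball (0:ℂ) 1))
    (hb : Set.InjOn ψ (ball (0:ℂ) 1)) {V : Set ℂ} (hVs : V ⊆ ball (0:ℂ) 1) (hV : IsOpen V) :
    IsOpen (ψ '' V) := by
  have han : AnalyticOnNhd ℂ ψ (ball (0:ℂ) 1) := hd.analyticOnNhd isOpen_ball
  rcases han.is_constant_or_isOpen (convex_ball (0:ℂ) 1).isPreconnected with hc | ho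
  · obtain ⟨c, hc⟩ := hc
    exfalso
    have h0 : (0:ℂ) ∈ ball (0:ℂ) 1 := by simp
    have h12 : (1/2 : ℂ) ∈ ball (0:ℂ) 1 := by
      simp [mem_ball, dist_eq_norm]; norm_num
    have : (0:ℂ) = 1/2 := hb h0 h12 (by rw [hc _ h0, hc _ h12])
    norm_num at this
  · exact ho V hVs hV

/-- Surjectivity lemma: let `X` be a Banach space of holomorphic functions on
the unit disk (modelled as an abstract complex Banach space `E` together with a
linear embedding `ι` into functions, injective up to equality on `𝔻`, whose
values are holomorphic on `𝔻`), in which norm convergence implies locally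
uniform convergence on `𝔻`.  If there is a bounded non-constant `h ∈ X` with
`h(0) = 0` and holomorphic automorphisms `φₙ` of `𝔻` with `h∘φₙ ∈ X` and
`‖h∘φₙ‖_X → 0`, then `X` contains a function mapping `𝔻` onto `ℂ`. -/
theorem surjective_function_exists
    {E : Type*} [NormedAddCommGroup E] [NormedSpace ℂ E] [CompleteSpace E]
    (ι : E →ₗ[ℂ] (ℂ → ℂ))
    (hinj : ∀ x y : E, Set.EqOn (ι x) (ι y) (Metric.ball 0 1) → x = y)
    (hhol : ∀ x : E, DifferentiableOn ℂ (ι x) (Metric.ball 0 1))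
    (hconv : ∀ (u : ℕ → E) (x : E), Filter.Tendsto u Filter.atTop (nhds x) →
      TendstoLocallyUniformlyOn (fun n => ι (u n)) (ι x) Filter.atTop (Metric.ball 0 1))
    (h : E)
    (hbdd : ∃ C : ℝ, ∀ z ∈ Metric.ball (0 : ℂ) 1, ‖ι h z‖ ≤ C)
    (hnc : ¬ ∃ c : ℂ, ∀ z ∈ Metric.ball (0 : ℂ) 1, ι h z = c)
    (h0 : ι h 0 = 0)
    (φ : ℕ → ℂ → ℂ)
    (hφ : ∀ n, DifferentiableOn ℂ (φ n) (Metric.ball 0 1) ∧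
      Set.BijOn (φ n) (Metric.ball 0 1) (Metric.ball 0 1))
    (e : ℕ → E)
    (he : ∀ n, Set.EqOn (ι (e n)) (fun z => ι h (φ n z)) (Metric.ball 0 1))
    (hlim : Filter.Tendsto (fun n => ‖e n‖) Filter.atTop (nhds 0)) :
    ∃ f : E, (ι f) '' Metric.ball 0 1 = Set.univ := by
  classical
  obtain ⟨Cb, hCb⟩ := hbdd
  have hCb0 : 0 ≤ Cb := le_trans (norm_nonneg _) (hCb 0 (by simp))
  have hφmap : ∀ n, ∀ z ∈ ball (0:ℂ) 1, φ n z ∈ ball (0:ℂ) 1 := fun n => (hφ n).2.mapsTo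
  have hebd : ∀ n, ∀ z ∈ ball (0:ℂ) 1, ‖ι (e n) z‖ ≤ Cb := by
    intro n z hz
    rw [he n hz]
    exact hCb _ (hφmap n z hz)
  -- Step A : uniform evaluation bounds on compacts
  have evalB : ∀ K : Set ℂ, ∃ CK : ℝ, 0 ≤ CK ∧
      (IsCompact K → K ⊆ ball (0:ℂ) 1 → ∀ (x : E), ∀ z ∈ K, ‖ι x z‖ ≤ CK * ‖x‖) := by
    intro K
    by_cases hK : IsCompact K ∧ K ⊆ ball (0:ℂ) 1 ∧ K.Nonempty
    · obtain ⟨hKc, hKs, hKne⟩ := hK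
      have hLcont : ∀ z, z ∈ ball (0:ℂ) 1 → Continuous (fun x : E => ι x z) := by
        intro z hz
        have hseq : SeqContinuous (fun x : E => ι x z) := by
          intro u x hu
          exact (hconv u x hu).tendsto_at hz
        exact hseq.continuous
      set g : K → (E →L[ℂ] ℂ) := fun z =>
        ⟨{ toFun := fun x => ι x z.1
           map_add' := fun a b => by simp
           map_smul' := fun c a => by simp }, hLcont z.1 (hKs z.2)⟩ with hg
      have hpb : ∀ x : E, ∃ C, ∀ z : K, ‖g z x‖ ≤ C := by
        intro x
        have hcont : ContinuousOn (ι x) K := (hhol x).continuousOn.mono hKs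
        obtain ⟨C, hC⟩ := hKc.exists_bound_of_continuousOn hcont
        exact ⟨C, fun z => hC z.1 z.2⟩
      obtain ⟨C', hC'⟩ := banach_steinhaus hpb
      refine ⟨max C' 0, le_max_right _ _, fun _ _ x z hz => ?_⟩
      have h1 : ‖g ⟨z, hz⟩ x‖ ≤ ‖g ⟨z, hz⟩‖ * ‖x‖ := (g ⟨z, hz⟩).le_opNorm x
      have h2 : ‖g ⟨z, hz⟩‖ * ‖x‖ ≤ max C' 0 * ‖x‖ :=
        mul_le_mul_of_nonneg_right ((hC' ⟨z, hz⟩).trans (le_max_left _ _)) (norm_nonneg x)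
      exact le_trans h1 h2
    · refine ⟨0, le_rfl, fun h1 h2 x z hz => absurd ⟨h1, h2, ⟨z, hz⟩⟩ hK⟩
  choose CKf hCKf0 hCKf using evalB
  -- Step B : image of h contains a closed ball
  have hhopen : ∀ s ⊆ ball (0:ℂ) 1, IsOpen s → IsOpen (ι h '' s) := by
    have han : AnalyticOnNhd ℂ (ι h) (ball (0:ℂ) 1) := (hhol h).analyticOnNhd isOpen_ball
    rcases han.is_constant_or_isOpen (convex_ball (0:ℂ) 1).isPreconnected with hc | ho
    · exact absurd hc hnc
    · exact ho
  obtain ⟨δ, hδ0, hδ⟩ : ∃ δ : ℝ, 0 < δ ∧ closedBall (0:ℂ) δ ⊆ ι h '' (ball (0:ℂ) 1) := by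
    have h0mem : (0:ℂ) ∈ ι h '' ball (0:ℂ) 1 := ⟨0, by simp, h0⟩
    have hopen : IsOpen (ι h '' ball (0:ℂ) 1) := hhopen _ (subset_refl _) isOpen_ball
    obtain ⟨ε, hε0, hε⟩ := Metric.isOpen_iff.mp hopen 0 h0mem
    exact ⟨ε/2, by positivity, (closedBall_subset_ball (by linarith)).trans hε⟩
  -- Step C : uniform family of good disks
  obtain ⟨η, hη0, Kc, hKcC, hKcS, hKc⟩ : ∃ η : ℝ, 0 < η ∧ ∃ Kc : Set ℂ, IsCompact Kc ∧
      Kc ⊆ ball (0:ℂ) 1 ∧ ∀ a ∈ closedBall (0:ℂ) δ, ∃ ζ ρ, 0 < ρ ∧ ζ ∈ ball (0:ℂ) 1 ∧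
        closedBall ζ ρ ⊆ Kc ∧ ∀ z ∈ sphere ζ ρ, ‖ι h ζ - a‖ + η ≤ ‖ι h z - a‖ := by
    have key : ∀ a ∈ closedBall (0:ℂ) δ, ∃ ζ ρ ηa, 0 < ρ ∧ 0 < ηa ∧ ζ ∈ ball (0:ℂ) 1 ∧
        closedBall ζ ρ ⊆ ball (0:ℂ) 1 ∧ ι h ζ = a ∧
        ∀ z ∈ sphere ζ ρ, 3 * ηa ≤ ‖ι h z - a‖ := by
      intro a ha
      obtain ⟨ζ, hζD, hζa⟩ := hδ ha
      have han : AnalyticOnNhd ℂ (ι h) (ball (0:ℂ) 1) := (hhol h).analyticOnNhd isOpen_ball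
      have hne : ∀ᶠ z in nhdsWithin ζ {ζ}ᶜ, ι h z ≠ a := by
        rcases (han ζ hζD).eventually_eq_or_eventually_ne (analyticAt_const (v := a))
          with hc | hne
        · exfalso
          apply hnc
          refine ⟨a, fun z hz => ?_⟩
          exact han.eqOn_of_preconnected_of_eventuallyEq analyticOnNhd_const
            (convex_ball (0:ℂ) 1).isPreconnected hζD hc hz
        · exact hne
      rw [eventually_nhdsWithin_iff] at hne
      rw [Metric.eventually_nhds_iff] at hne
      obtain ⟨ε, hε0, hε⟩ := hne
      have hζ1 : ‖ζ‖ < 1 := mem_ball_zero_iff.mp hζD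
      set ρ := min (ε/2) ((1 - ‖ζ‖)/2) with hρdef
      have hρ0 : 0 < ρ := lt_min (by positivity) (by linarith)
      have hρball : closedBall ζ ρ ⊆ ball (0:ℂ) 1 := by
        intro z hz
        rw [mem_closedBall, dist_eq_norm] at hz
        rw [mem_ball_zero_iff]
        have h1 : ρ ≤ (1 - ‖ζ‖)/2 := min_le_right _ _
        calc ‖z‖ = ‖z - ζ + ζ‖ := by ring_nf
          _ ≤ ‖z - ζ‖ + ‖ζ‖ := norm_add_le _ _
          _ ≤ (1 - ‖ζ‖)/2 + ‖ζ‖ := by linarith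
          _ < 1 := by linarith
      have hsphne : ∀ z ∈ sphere ζ ρ, ι h z ≠ a := by
        intro z hz
        rw [mem_sphere] at hz
        apply hε
        · rw [hz]; exact lt_of_le_of_lt (min_le_left _ _) (by linarith)
        · simp only [mem_compl_iff, mem_singleton_iff]
          intro hzζ
          rw [hzζ, dist_self] at hz
          exact absurd hz.symm hρ0.ne'
      have hsne : (sphere ζ ρ).Nonempty := NormedSpace.sphere_nonempty.mpr hρ0.le
      have hcont : ContinuousOn (fun z => ‖ι h z - a‖) (sphere ζ ρ) := by
        apply ContinuousOn.norm
        exact ((hhol h).continuousOn.mono ((sphere_subset_closedBall).trans hρball)).sub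
          continuousOn_const
      obtain ⟨zm, hzm, hmin⟩ := (isCompact_sphere ζ ρ).exists_isMinOn hsne hcont
      have hzm0 : 0 < ‖ι h zm - a‖ := by
        rw [norm_pos_iff, sub_ne_zero]
        exact hsphne zm hzm
      refine ⟨ζ, ρ, ‖ι h zm - a‖/3, hρ0, by positivity, hζD, hρball, hζa, ?_⟩
      intro z hz
      have := hmin hz
      simp only [mul_div_cancel₀] at this ⊢
      calc 3 * (‖ι h zm - a‖/3) = ‖ι h zm - a‖ := by ring
        _ ≤ ‖ι h z - a‖ := this
    choose ζf ρf ηf hρf hηf hζfD hsubf hvalf hgapf using key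
    have hcover : closedBall (0:ℂ) δ ⊆
        ⋃ a : closedBall (0:ℂ) δ, ball (a : ℂ) (ηf a a.2) := by
      intro a ha
      exact mem_iUnion.mpr ⟨⟨a, ha⟩, mem_ball_self (hηf a ha)⟩
    obtain ⟨t, ht⟩ := (isCompact_closedBall (0:ℂ) δ).elim_finite_subcover
      _ (fun a : closedBall (0:ℂ) δ => isOpen_ball) hcover
    have h0δ : (0:ℂ) ∈ closedBall (0:ℂ) δ := by simp [hδ0.le]
    have htne : t.Nonempty := by
      rcases mem_iUnion₂.mp (ht h0δ) with ⟨i, hit, _⟩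
      exact ⟨i, hit⟩
    refine ⟨t.inf' htne (fun a => ηf a a.2), ?_, ⋃ a ∈ t, closedBall (ζf a a.2) (ρf a a.2),
      ?_, ?_, ?_⟩
    · rw [Finset.lt_inf'_iff]
      exact fun a _ => hηf a a.2
    · exact t.finite_toSet.isCompact_biUnion (fun a _ => isCompact_closedBall _ _)
    · exact iUnion₂_subset fun a _ => hsubf a a.2
    · intro a ha
      rcases mem_iUnion₂.mp (ht ha) with ⟨i, hit, hai⟩
      refine ⟨ζf i i.2, ρf i i.2, hρf i i.2, hζfD i i.2, fun y hy => Set.mem_biUnion hit hy, ?_⟩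
      intro z hz
      have hgap := hgapf i i.2 z hz
      have h1 : ‖ι h (ζf i i.2) - a‖ < ηf i i.2 := by
        rw [hvalf i i.2]
        rw [mem_ball, dist_comm] at hai
        rw [← dist_eq_norm]
        exact hai
      have h2 : t.inf' htne (fun a => ηf a a.2) ≤ ηf i i.2 := Finset.inf'_le _ hit
      have h3 : ‖ι h z - (i:ℂ)‖ ≤ ‖ι h z - a‖ + ‖(i:ℂ) - a‖ := by
        calc ‖ι h z - (i:ℂ)‖ = ‖(ι h z - a) - ((i:ℂ) - a)‖ := by ring_nf
          _ ≤ ‖ι h z - a‖ + ‖(i:ℂ) - a‖ := norm_sub_le _ _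
      have h4 : ‖(i:ℂ) - a‖ < ηf i i.2 := by
        rw [mem_ball, dist_comm, dist_eq_norm] at hai
        exact hai
      rw [hvalf i i.2]
      linarith
  -- Step E : compact preimages
  have lemE : ∀ n : ℕ, ∃ r : ℝ, 0 ≤ r ∧ r < 1 ∧
      ∀ z ∈ ball (0:ℂ) 1, φ n z ∈ Kc → z ∈ closedBall (0:ℂ) r := by
    intro n
    have hd := (hφ n).1
    have hb := (hφ n).2
    have hrle : ∀ m : ℕ, (0:ℝ) ≤ 1 - 1/((m:ℝ)+1) ∧ (1 - 1/((m:ℝ)+1) : ℝ) < 1 := by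
      intro m
      constructor
      · have h1 : (1:ℝ)/(m+1) ≤ 1 := by
          rw [div_le_one (by positivity)]
          simp
        linarith
      · have h1 : (0:ℝ) < 1/(m+1) := by positivity
        linarith
    have hopens : ∀ m : ℕ, IsOpen (φ n '' (ball (0:ℂ) (1 - 1/(m+1)))) := by
      intro m
      exact image_open_of_injOn hd hb.injOn (ball_subset_ball (hrle m).2.le) isOpen_ball
    have hcov : Kc ⊆ ⋃ m : ℕ, φ n '' (ball (0:ℂ) (1 - 1/(m+1))) := by
      intro q hq
      obtain ⟨z, hz, hzq⟩ := hb.surjOn (hKcS hq)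
      have hz1 : ‖z‖ < 1 := mem_ball_zero_iff.mp hz
      obtain ⟨m, hm⟩ := exists_nat_one_div_lt (by linarith : (0:ℝ) < 1 - ‖z‖)
      refine mem_iUnion.mpr ⟨m, ⟨z, mem_ball_zero_iff.mpr (by push_cast at hm ⊢; linarith), hzq⟩⟩
    have hmono : ∀ {m m' : ℕ}, m ≤ m' →
        ball (0:ℂ) (1 - 1/(m+1)) ⊆ ball (0:ℂ) (1 - 1/(m'+1)) := by
      intro m m' hmm
      apply ball_subset_ball
      have hcast : (m:ℝ) ≤ (m':ℝ) := Nat.cast_le.mpr hmm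
      have h1 : (1:ℝ)/(m'+1) ≤ 1/(m+1) :=
        one_div_le_one_div_of_le (by positivity) (by linarith)
      linarith
    have hdir : Directed (· ⊆ ·) (fun m : ℕ => φ n '' (ball (0:ℂ) (1 - 1/(m+1)))) :=
      fun m m' => ⟨max m m', Set.image_mono (hmono (le_max_left _ _)),
        Set.image_mono (hmono (le_max_right _ _))⟩
    obtain ⟨m, hm⟩ := hKcC.elim_directed_cover _ hopens hcov hdir
    refine ⟨1 - 1/(m+1), (hrle m).1, (hrle m).2, ?_⟩
    intro z hz hzK
    obtain ⟨z', hz', heq⟩ := hm hzK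
    have : z' = z := hb.injOn (ball_subset_ball (hrle m).2.le hz') hz heq
    rw [← this]
    exact ball_subset_closedBall hz'
  choose rf hrf0 hrf1 hrfQ using lemE
  -- coefficient formula
  obtain ⟨cval, hcval⟩ : ∃ f : ℕ → ℝ → ℝ,
      ∀ k σ, f k σ = ((k:ℝ)+1)/δ + (2*Cb*(max σ 0) + 3)/η := ⟨_, fun _ _ => rfl⟩
  have hcpos : ∀ (k : ℕ) (σ : ℝ), 0 < cval k σ := by
    intro k σ
    rw [hcval]
    have : 0 ≤ max σ 0 := le_max_right _ _
    positivity
  have hcδ : ∀ (k : ℕ) (σ : ℝ), ((k:ℝ)+1)/δ ≤ cval k σ := by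
    intro k σ
    rw [hcval]
    have : 0 ≤ max σ 0 := le_max_right _ _
    have : 0 ≤ (2*Cb*(max σ 0) + 3)/η := by positivity
    linarith
  have hcη : ∀ (k : ℕ) (σ : ℝ), 0 ≤ σ → 2*Cb*σ + 3 ≤ η * cval k σ := by
    intro k σ hσ
    rw [hcval]
    rw [max_eq_left hσ, mul_add, mul_div_cancel₀ _ (ne_of_gt hη0)]
    have : 0 ≤ η * (((k:ℝ)+1)/δ) := by positivity
    linarith
  -- choice of indices
  have hEx : ∀ (k : ℕ) (s : ℝ × ℝ), ∃ n : ℕ,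
      cval k s.1 * max 1 s.2 * ‖e n‖ ≤ (2⁻¹:ℝ)^k := by
    intro k s
    have hc := hcpos k s.1
    have hM : (0:ℝ) < max 1 s.2 := lt_of_lt_of_le one_pos (le_max_left _ _)
    have hε : (0:ℝ) < (2⁻¹:ℝ)^k / (cval k s.1 * max 1 s.2) := by positivity
    have hev : ∀ᶠ n in atTop, ‖e n‖ < (2⁻¹:ℝ)^k / (cval k s.1 * max 1 s.2) := by
      have := hlim (Iio_mem_nhds hε)
      simpa [Set.mem_Iio] using this
    obtain ⟨n, hn⟩ := hev.exists
    refine ⟨n, ?_⟩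
    calc cval k s.1 * max 1 s.2 * ‖e n‖
        ≤ cval k s.1 * max 1 s.2 * ((2⁻¹:ℝ)^k / (cval k s.1 * max 1 s.2)) := by
          exact mul_le_mul_of_nonneg_left hn.le (by positivity)
      _ = (2⁻¹:ℝ)^k := by
          field_simp
  choose nf hnf using hEx
  -- the recursively defined state
  obtain ⟨St, hSt0, hStS⟩ : ∃ St : ℕ → ℝ × ℝ, St 0 = (0,1) ∧ ∀ k, St (k+1) =
      ((St k).1 + cval k (St k).1,
        max (St k).2 (CKf (closedBall (0:ℂ) (rf (nf k (St k)))))) :=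
    ⟨fun k => Nat.rec ((0:ℝ),(1:ℝ)) (fun k ih =>
      (ih.1 + cval k ih.1, max ih.2 (CKf (closedBall (0:ℂ) (rf (nf k ih)))))) k,
      rfl, fun k => rfl⟩
  obtain ⟨nseq, cseq, rseq, hnseq, hcseq, hrseq⟩ :
      ∃ (a : ℕ → ℕ) (b : ℕ → ℝ) (c : ℕ → ℝ), (∀ k, a k = nf k (St k)) ∧
        (∀ k, b k = cval k (St k).1) ∧ (∀ k, c k = rf (nf k (St k))) :=
    ⟨_, _, _, fun _ => rfl, fun _ => rfl, fun _ => rfl⟩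
  -- basic sequence properties
  have hσS : ∀ k, (St (k+1)).1 = (St k).1 + cseq k := by
    intro k; rw [hStS k, hcseq]
  have hμS : ∀ k, (St (k+1)).2 = max (St k).2 (CKf (closedBall (0:ℂ) (rseq k))) := by
    intro k; rw [hStS k, hrseq]
  have hck : ∀ k, 0 < cseq k := fun k => by rw [hcseq]; exact hcpos _ _
  have hσnn : ∀ k, 0 ≤ (St k).1 := by
    intro k; induction k with
    | zero => rw [hSt0]
    | succ k ih =>
        rw [hσS k]
        exact add_nonneg ih (hck k).le
  have hμ1 : ∀ k, 1 ≤ (St k).2 := by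
    intro k; induction k with
    | zero => rw [hSt0]
    | succ k ih =>
        rw [hμS k]
        exact le_max_of_le_left ih
  have hμmono : ∀ j k, j ≤ k → (St j).2 ≤ (St k).2 := by
    intro j k hjk
    induction hjk with
    | refl => exact le_rfl
    | step _ ih =>
        rename_i k' hk'
        exact le_trans ih (by rw [hμS k']; exact le_max_left _ _)
  have hμCK : ∀ k, CKf (closedBall (0:ℂ) (rseq k)) ≤ (St (k+1)).2 := fun k => by
    rw [hμS]; exact le_max_right _ _
  have hsum : ∀ k, ∑ j ∈ Finset.range k, cseq j = (St k).1 := by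
    intro k; induction k with
    | zero => rw [hSt0]; simp
    | succ k ih => rw [Finset.sum_range_succ, ih, hσS]
  have hnbd : ∀ k, cseq k * (St k).2 * ‖e (nseq k)‖ ≤ (2⁻¹:ℝ)^k := by
    intro k
    have hkk := hnf k (St k)
    rw [max_eq_right (hμ1 k)] at hkk
    rw [hcseq, hnseq]
    exact hkk
  have hcbd : ∀ k, cseq k * ‖e (nseq k)‖ ≤ (2⁻¹:ℝ)^k := by
    intro k
    refine le_trans ?_ (hnbd k)
    have h1 : 1 ≤ (St k).2 := hμ1 k
    nlinarith [mul_nonneg (hck k).le (norm_nonneg (e (nseq k))), h1]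
  -- the candidate function
  have hgeom : Summable (fun k : ℕ => (2⁻¹:ℝ)^k) :=
    summable_geometric_of_lt_one (by norm_num) (by norm_num)
  have hsumE : Summable (fun k => ((cseq k : ℝ) : ℂ) • e (nseq k)) := by
    apply Summable.of_norm
    apply Summable.of_nonneg_of_le (fun k => norm_nonneg _) (fun k => ?_) hgeom
    rw [norm_smul, Complex.norm_real, Real.norm_eq_abs, abs_of_pos (hck k)]
    exact hcbd k
  set x := ∑' k, ((cseq k : ℝ) : ℂ) • e (nseq k) with hxdef
  have hxsum : HasSum (fun k => ((cseq k : ℝ) : ℂ) • e (nseq k)) x := hsumE.hasSum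
  refine ⟨x, ?_⟩
  rw [Set.eq_univ_iff_forall]
  intro w
  -- pointwise expansion of ι x
  have hpt : ∀ z ∈ ball (0:ℂ) 1,
      HasSum (fun k => ((cseq k:ℝ):ℂ) * ι (e (nseq k)) z) (ι x z) := by
    intro z hz
    have hzKs : closedBall (0:ℂ) ‖z‖ ⊆ ball (0:ℂ) 1 :=
      closedBall_subset_ball (mem_ball_zero_iff.mp hz)
    have hzK : z ∈ closedBall (0:ℂ) ‖z‖ := by
      simp [mem_closedBall, dist_eq_norm]
    have hsv : Summable (fun k => ((cseq k:ℝ):ℂ) * ι (e (nseq k)) z) := by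
      apply Summable.of_norm
      apply Summable.of_nonneg_of_le (fun k => norm_nonneg _) (fun k => ?_)
        (hgeom.mul_left (CKf (closedBall (0:ℂ) ‖z‖)))
      rw [norm_mul, Complex.norm_real, Real.norm_eq_abs, abs_of_pos (hck k)]
      calc cseq k * ‖ι (e (nseq k)) z‖
          ≤ cseq k * (CKf (closedBall (0:ℂ) ‖z‖) * ‖e (nseq k)‖) := by
            exact mul_le_mul_of_nonneg_left
              (hCKf _ (isCompact_closedBall _ _) hzKs _ z hzK) (hck k).le
        _ = CKf (closedBall (0:ℂ) ‖z‖) * (cseq k * ‖e (nseq k)‖) := by ring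
        _ ≤ CKf (closedBall (0:ℂ) ‖z‖) * (2⁻¹:ℝ)^k := by
            exact mul_le_mul_of_nonneg_left (hcbd k) (hCKf0 _)
    have h1 : Tendsto (fun m => ∑ k ∈ Finset.range m, ((cseq k:ℝ):ℂ) * ι (e (nseq k)) z)
        atTop (nhds (∑' k, ((cseq k:ℝ):ℂ) * ι (e (nseq k)) z)) := hsv.hasSum.tendsto_sum_nat
    have hparts : Tendsto (fun m => ∑ k ∈ Finset.range m, ((cseq k:ℝ):ℂ) • e (nseq k))
        atTop (nhds x) := hxsum.tendsto_sum_nat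
    have h2 := (hconv _ x hparts).tendsto_at hz
    have heq : (fun m => ι (∑ k ∈ Finset.range m, ((cseq k:ℝ):ℂ) • e (nseq k)) z)
        = fun m => ∑ k ∈ Finset.range m, ((cseq k:ℝ):ℂ) * ι (e (nseq k)) z := by
      funext m
      rw [map_sum, Finset.sum_apply]
      apply Finset.sum_congr rfl
      intro j _
      rw [map_smul]
      simp [smul_eq_mul]
    rw [heq] at h2
    have := tendsto_nhds_unique h2 h1
    exact this ▸ hsv.hasSum
  -- choose the step k
  obtain ⟨k, hk⟩ : ∃ k : ℕ, ‖w‖ ≤ (k:ℝ) := ⟨⌈‖w‖⌉₊, Nat.le_ceil _⟩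
  have hc0 : 0 < cseq k := hck k
  have hcC : ((cseq k:ℝ):ℂ) ≠ 0 := Complex.ofReal_ne_zero.mpr hc0.ne'
  set a := w / ((cseq k:ℝ):ℂ) with hadef
  have hwa : ((cseq k:ℝ):ℂ) * a = w := mul_div_cancel₀ w hcC
  have hcδk : ((k:ℝ)+1)/δ ≤ cseq k := by rw [hcseq]; exact hcδ k _
  have ha : a ∈ closedBall (0:ℂ) δ := by
    rw [mem_closedBall_zero_iff, hadef, norm_div, Complex.norm_real, Real.norm_eq_abs, abs_of_pos hc0]
    rw [div_le_iff₀ hc0]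
    have h1 : (k:ℝ) + 1 ≤ δ * cseq k := by
      rw [← div_le_iff₀' hδ0]
      exact hcδk
    linarith
  obtain ⟨ζ, ρ, hρ0, hζD, hζK, hgap⟩ := hKc a ha
  obtain ⟨z₀, hz₀D, hz₀ζ⟩ := (hφ (nseq k)).2.surjOn hζD
  set U := ball (0:ℂ) 1 ∩ (φ (nseq k)) ⁻¹' (ball ζ ρ) with hUdef
  have hUopen : IsOpen U :=
    ContinuousOn.isOpen_inter_preimage (hφ (nseq k)).1.continuousOn isOpen_ball isOpen_ball
  have hz₀U : z₀ ∈ U := ⟨hz₀D, by rw [mem_preimage, hz₀ζ]; exact mem_ball_self hρ0⟩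
  set Q := closedBall (0:ℂ) (rseq k) with hQdef
  have hrk1 : rseq k < 1 := by rw [hrseq]; exact hrf1 _
  have hQD : Q ⊆ ball (0:ℂ) 1 := closedBall_subset_ball hrk1
  have hUQ : U ⊆ Q := by
    rintro z ⟨hzD, hzB⟩
    rw [hQdef, hrseq, ← hnseq]
    exact hrfQ (nseq k) z hzD (hζK (ball_subset_closedBall hzB))
  have hclQ : closure U ⊆ Q := closure_minimal hUQ Metric.isClosed_closedBall
  -- term bounds on Q for the tail
  have hterm : ∀ j, k + 1 ≤ j → ∀ z ∈ Q, ‖((cseq j:ℝ):ℂ) * ι (e (nseq j)) z‖ ≤ (2⁻¹:ℝ)^j := by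
    intro j hj z hzQ
    rw [norm_mul, Complex.norm_real, Real.norm_eq_abs, abs_of_pos (hck j)]
    have h1 : ‖ι (e (nseq j)) z‖ ≤ CKf Q * ‖e (nseq j)‖ :=
      hCKf Q (isCompact_closedBall _ _) hQD _ z hzQ
    have h2 : CKf Q ≤ (St j).2 := by
      refine le_trans (hμCK k) (hμmono _ _ hj)
    calc cseq j * ‖ι (e (nseq j)) z‖ ≤ cseq j * (CKf Q * ‖e (nseq j)‖) :=
          mul_le_mul_of_nonneg_left h1 (hck j).le
      _ ≤ cseq j * ((St j).2 * ‖e (nseq j)‖) := by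
          refine mul_le_mul_of_nonneg_left ?_ (hck j).le
          exact mul_le_mul_of_nonneg_right h2 (norm_nonneg _)
      _ = cseq j * (St j).2 * ‖e (nseq j)‖ := by ring
      _ ≤ (2⁻¹:ℝ)^j := hnbd j
  -- decomposition : head + leading term + small tail
  have hdec : ∀ z ∈ Q, ‖ι x z - (∑ j ∈ Finset.range k, ((cseq j:ℝ):ℂ) * ι (e (nseq j)) z)
      - ((cseq k:ℝ):ℂ) * ι (e (nseq k)) z‖ ≤ (2⁻¹:ℝ)^k := by
    intro z hzQ
    have hz := hQD hzQ
    have hps := hpt z hz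
    have hsv := hps.summable
    have hsplit := Summable.sum_add_tsum_nat_add (f := fun j => ((cseq j:ℝ):ℂ) * ι (e (nseq j)) z)
      (k+1) hsv
    have hmaj : HasSum (fun j : ℕ => (2⁻¹:ℝ)^(j+(k+1))) ((2⁻¹:ℝ)^k) := by
      have hg : HasSum (fun j : ℕ => (2⁻¹:ℝ)^j * (2⁻¹:ℝ)^(k+1))
          ((1 - 2⁻¹)⁻¹ * (2⁻¹:ℝ)^(k+1)) :=
        (hasSum_geometric_of_lt_one (by norm_num) (by norm_num)).mul_right _
      have hco : (fun j : ℕ => (2⁻¹:ℝ)^j * (2⁻¹:ℝ)^(k+1))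
          = fun j : ℕ => (2⁻¹:ℝ)^(j+(k+1)) := by
        funext j
        ring
      rw [hco] at hg
      have : ((1:ℝ) - 2⁻¹)⁻¹ * (2⁻¹:ℝ)^(k+1) = (2⁻¹:ℝ)^k := by
        rw [pow_succ]
        norm_num
        ring
      rwa [this] at hg
    have htail : ‖∑' j, ((cseq (j+(k+1)):ℝ):ℂ) * ι (e (nseq (j+(k+1)))) z‖ ≤ (2⁻¹:ℝ)^k := by
      apply tsum_of_norm_bounded hmaj
      intro j
      exact hterm (j+(k+1)) (by omega) z hzQ
    have hrw : ι x z - (∑ j ∈ Finset.range k, ((cseq j:ℝ):ℂ) * ι (e (nseq j)) z)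
        - ((cseq k:ℝ):ℂ) * ι (e (nseq k)) z
        = ∑' j, ((cseq (j+(k+1)):ℝ):ℂ) * ι (e (nseq (j+(k+1)))) z := by
      rw [← hps.tsum_eq, ← hsplit, Finset.sum_range_succ]
      ring
    rw [hrw]
    exact htail
  -- head bound
  have hhead : ∀ z ∈ ball (0:ℂ) 1,
      ‖∑ j ∈ Finset.range k, ((cseq j:ℝ):ℂ) * ι (e (nseq j)) z‖ ≤ Cb * (St k).1 := by
    intro z hz
    calc ‖∑ j ∈ Finset.range k, ((cseq j:ℝ):ℂ) * ι (e (nseq j)) z‖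
        ≤ ∑ j ∈ Finset.range k, ‖((cseq j:ℝ):ℂ) * ι (e (nseq j)) z‖ := norm_sum_le _ _
      _ ≤ ∑ j ∈ Finset.range k, cseq j * Cb := by
          apply Finset.sum_le_sum
          intro j _
          rw [norm_mul, Complex.norm_real, Real.norm_eq_abs, abs_of_pos (hck j)]
          exact mul_le_mul_of_nonneg_left (hebd (nseq j) z hz) (hck j).le
      _ = Cb * (St k).1 := by rw [← Finset.sum_mul, hsum k, mul_comm]
  -- the minimum modulus bound
  set m := cseq k * (‖ι h ζ - a‖ + η) - Cb * (St k).1 - (2⁻¹:ℝ)^k with hmdef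
  have hcηk : 2*Cb*(St k).1 + 3 ≤ η * cseq k := by
    rw [hcseq]
    exact hcη k _ (hσnn k)
  have hpow1 : (2⁻¹:ℝ)^k ≤ 1 := by
    apply pow_le_one₀ <;> norm_num
  -- center bound
  have hval₀ : ι (e (nseq k)) z₀ = ι h ζ := by
    rw [he (nseq k) hz₀D]
    simp only [hz₀ζ]
  have hcenter : ‖ι x z₀ - w‖ < m := by
    have hz₀Q : z₀ ∈ Q := hUQ hz₀U
    have hz₀D' : z₀ ∈ ball (0:ℂ) 1 := hz₀D
    have hA := hdec z₀ hz₀Q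
    have hB := hhead z₀ hz₀D'
    rw [hval₀] at hA
    have hCeq : ‖((cseq k:ℝ):ℂ) * ι h ζ - w‖ = cseq k * ‖ι h ζ - a‖ := by
      rw [← hwa, ← mul_sub, norm_mul, Complex.norm_real, Real.norm_eq_abs, abs_of_pos hc0]
    have htri : ‖ι x z₀ - w‖ ≤ ‖ι x z₀ - (∑ j ∈ Finset.range k, ((cseq j:ℝ):ℂ) *
          ι (e (nseq j)) z₀) - ((cseq k:ℝ):ℂ) * ι h ζ‖
        + ‖∑ j ∈ Finset.range k, ((cseq j:ℝ):ℂ) * ι (e (nseq j)) z₀‖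
        + ‖((cseq k:ℝ):ℂ) * ι h ζ - w‖ := by
      have : ι x z₀ - w = (ι x z₀ - (∑ j ∈ Finset.range k, ((cseq j:ℝ):ℂ) *
          ι (e (nseq j)) z₀) - ((cseq k:ℝ):ℂ) * ι h ζ)
        + (∑ j ∈ Finset.range k, ((cseq j:ℝ):ℂ) * ι (e (nseq j)) z₀)
        + (((cseq k:ℝ):ℂ) * ι h ζ - w) := by ring
      rw [this]
      exact norm_add₃_le
    rw [hCeq] at htri
    have hη2 : 2*Cb*(St k).1 + 2*(2⁻¹:ℝ)^k < η * cseq k := by nlinarith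
    rw [hmdef]
    have : cseq k * (‖ι h ζ - a‖ + η) = cseq k * ‖ι h ζ - a‖ + η * cseq k := by ring
    rw [this]
    linarith
  -- frontier bound
  have hfront : ∀ z ∈ frontier U, m ≤ ‖ι x z - w‖ := by
    intro z hzf
    have hzcl : z ∈ closure U := frontier_subset_closure hzf
    have hzQ : z ∈ Q := hclQ hzcl
    have hzD : z ∈ ball (0:ℂ) 1 := hQD hzQ
    have hznU : z ∉ U := by
      rw [hUopen.frontier_eq] at hzf
      exact hzf.2
    -- φ z is on the sphere
    have hsph : φ (nseq k) z ∈ sphere ζ ρ := by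
      have hle : dist (φ (nseq k) z) ζ ≤ ρ := by
        have hcont : ContinuousOn (φ (nseq k)) (closure U) :=
          (hφ (nseq k)).1.continuousOn.mono (hclQ.trans hQD)
        have himg := hcont.image_closure (s := U)
        have h1 : φ (nseq k) z ∈ closure (φ (nseq k) '' U) := himg ⟨z, hzcl, rfl⟩
        have h2 : φ (nseq k) '' U ⊆ ball ζ ρ := by
          rintro y ⟨y', hy', rfl⟩
          exact hy'.2
        have h3 := (closure_mono h2).trans closure_ball_subset_closedBall h1
        exact mem_closedBall.mp h3
      have hnlt : ¬ dist (φ (nseq k) z) ζ < ρ := by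
        intro hltρ
        exact hznU ⟨hzD, hltρ⟩
      rw [mem_sphere]
      exact le_antisymm hle (not_lt.mp hnlt)
    have hgz := hgap _ hsph
    have hvalz : ι (e (nseq k)) z = ι h (φ (nseq k) z) := he (nseq k) hzD
    have hA := hdec z hzQ
    have hB := hhead z hzD
    have hCeq : ‖((cseq k:ℝ):ℂ) * ι h (φ (nseq k) z) - w‖
        = cseq k * ‖ι h (φ (nseq k) z) - a‖ := by
      rw [← hwa, ← mul_sub, norm_mul, Complex.norm_real, Real.norm_eq_abs, abs_of_pos hc0]
    rw [hvalz] at hA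
    have htri : ‖((cseq k:ℝ):ℂ) * ι h (φ (nseq k) z) - w‖ ≤ ‖ι x z - w‖
        + ‖ι x z - (∑ j ∈ Finset.range k, ((cseq j:ℝ):ℂ) * ι (e (nseq j)) z)
            - ((cseq k:ℝ):ℂ) * ι h (φ (nseq k) z)‖
        + ‖∑ j ∈ Finset.range k, ((cseq j:ℝ):ℂ) * ι (e (nseq j)) z‖ := by
      have : ((cseq k:ℝ):ℂ) * ι h (φ (nseq k) z) - w = (ι x z - w)
          - (ι x z - (∑ j ∈ Finset.range k, ((cseq j:ℝ):ℂ) * ι (e (nseq j)) z)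
            - ((cseq k:ℝ):ℂ) * ι h (φ (nseq k) z))
          - (∑ j ∈ Finset.range k, ((cseq j:ℝ):ℂ) * ι (e (nseq j)) z) := by ring
      rw [this]
      exact le_trans (norm_sub_le _ _) (by gcongr; exact norm_sub_le _ _)
    rw [hCeq] at htri
    have hgz' : cseq k * (‖ι h ζ - a‖ + η) ≤ cseq k * ‖ι h (φ (nseq k) z) - a‖ :=
      mul_le_mul_of_nonneg_left hgz hc0.le
    rw [hmdef]
    linarith
  -- apply the minimum modulus lemma
  have hUb : Bornology.IsBounded U := (isBounded_ball).subset inter_subset_left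
  have hdiffcl : DiffContOnCl ℂ (ι x) U :=
    ⟨(hhol x).mono inter_subset_left, (hhol x).continuousOn.mono (hclQ.trans hQD)⟩
  obtain ⟨z, hzcl, hzw⟩ := minmod_lemma hUb hdiffcl hz₀U hfront hcenter
  exact ⟨z, hQD (hclQ hzcl), hzw⟩
end

section
/- Every function f in the Dirichlet space 𝒟 can be written as f = g₁ + g₂, where g₁, g₂ ∈ 𝒟 and neither g₁ nor g₂ has a zero in 𝔻. -/
open Complex MeasureTheory Metric Set

/-- Membership in the Dirichlet space `𝒟`: `f` is holomorphic on the open unit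
disk and its Dirichlet integral `(1/π)∫_𝔻 |f′|² dA` is finite (equivalently,
`|f′|²` is integrable on the disk). -/
def MemDirichlet (f : ℂ → ℂ) : Prop :=
  DifferentiableOn ℂ f (Metric.ball 0 1) ∧
    MeasureTheory.IntegrableOn (fun z => ‖deriv f z‖ ^ 2) (Metric.ball 0 1)

lemma det_mul_clm (c : ℂ) :
    (((1 : ℂ →L[ℂ] ℂ).smulRight c).restrictScalars ℝ).det = Complex.normSq c := by
  have h : (((1 : ℂ →L[ℂ] ℂ).smulRight c).restrictScalars ℝ : ℂ →ₗ[ℝ] ℂ)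
      = Algebra.lmul ℝ ℂ c := by
    ext z
    simp [mul_comm]
  rw [ContinuousLinearMap.det, h]
  rw [← Algebra.norm_apply, Algebra.norm_complex_apply]

/-- Every function in the Dirichlet space is the sum of two functions in the
Dirichlet space, neither of which has a zero in the unit disk. -/
theorem dirichlet_sum_of_two_nonvanishing (f : ℂ → ℂ) (hf : MemDirichlet f) :
    ∃ g₁ g₂ : ℂ → ℂ, MemDirichlet g₁ ∧ MemDirichlet g₂ ∧
      (∀ z ∈ Metric.ball (0 : ℂ) 1, g₁ z ≠ 0) ∧
      (∀ z ∈ Metric.ball (0 : ℂ) 1, g₂ z ≠ 0) ∧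
      (∀ z ∈ Metric.ball (0 : ℂ) 1, f z = g₁ z + g₂ z) := by
  obtain ⟨hdiff, hint⟩ := hf
  set s : Set ℂ := Metric.ball (0 : ℂ) 1 with hs
  have hsmeas : MeasurableSet s := measurableSet_ball
  -- the image of the disk has finite measure
  have hderiv : ∀ x ∈ s, HasFDerivWithinAt f
      (((1 : ℂ →L[ℂ] ℂ).smulRight (deriv f x)).restrictScalars ℝ) s x := by
    intro x hx
    have hx' : DifferentiableAt ℂ f x :=
      (hdiff x hx).differentiableAt (isOpen_ball.mem_nhds hx)
    exact ((hx'.hasDerivAt.hasFDerivAt).restrictScalars ℝ).hasFDerivWithinAt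
  have himg : volume (f '' s) < ⊤ := by
    calc volume (f '' s)
        ≤ ∫⁻ x in s, ENNReal.ofReal
            |(((1 : ℂ →L[ℂ] ℂ).smulRight (deriv f x)).restrictScalars ℝ).det| :=
          MeasureTheory.addHaar_image_le_lintegral_abs_det_fderiv volume hsmeas hderiv
      _ = ∫⁻ x in s, ENNReal.ofReal (‖deriv f x‖ ^ 2) := by
          congr 1
          ext x
          rw [det_mul_clm, _root_.abs_of_nonneg (Complex.normSq_nonneg _),
            Complex.sq_norm]
      _ < ⊤ := by
          have := hint.2
          rw [MeasureTheory.hasFiniteIntegral_iff_ofReal ?_] at this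
          · exact this
          · exact Filter.Eventually.of_forall fun x => by positivity
  -- find a point not in the image and not zero
  have hne : (f '' s ∪ {0}) ≠ univ := by
    intro h
    have : volume (f '' s ∪ {0}) < ⊤ :=
      lt_of_le_of_lt (measure_union_le _ _) (by simp [himg])
    rw [h] at this
    simp [MeasureTheory.measure_univ_of_isAddLeftInvariant] at this
  obtain ⟨c, hc⟩ : ∃ c : ℂ, c ∉ f '' s ∪ {0} := by
    by_contra h
    push_neg at h
    exact hne (eq_univ_of_forall h)
  simp only [mem_union, mem_singleton_iff, not_or] at hc
  obtain ⟨hcim, hc0⟩ := hc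
  refine ⟨fun z => f z - c, fun _ => c, ⟨?_, ?_⟩, ⟨?_, ?_⟩, ?_, ?_, ?_⟩
  · exact hdiff.sub (differentiableOn_const c)
  · have : (fun z => ‖deriv (fun z => f z - c) z‖ ^ 2) = fun z => ‖deriv f z‖ ^ 2 := by
      ext z; rw [deriv_sub_const]
    rw [this]; exact hint
  · exact differentiableOn_const c
  · simp only [deriv_const']
    simp only [norm_zero]; exact (integrableOn_const_iff (C := (0:ℝ))).2 (Or.inr measure_ball_lt_top)
    |>.congr_fun (fun x _ => by norm_num) measurableSet_ball
  · intro z hz hzero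
    exact hcim ⟨z, hz, by linear_combination hzero⟩
  · intro z _
    exact hc0
  · intro z _
    ring
end
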